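/- Let s ∈ [−1,1]^n, δ > 0, z = (I + L)^{−1} s, and let q ∈ ℝ^n satisfy ‖q − z‖_{I+L} ≤ δ·‖z‖_{I+L}. Then |√(qᵀ L⁺ q) − √(zᵀ L⁺ z)| ≤ √2·δ·n and |√(qᵀ L⁻ q) − √(zᵀ L⁻ z)| ≤ √2·δ·n. -/

import Mathlib

open Matrix

/-- The norm of a vector `x` with respect to a matrix `K`: `‖x‖_K = √(xᵀ K x)`. -/
noncomputable def matNorm {m : Type*} [Fintype m] (K : Matrix m m ℝ) (x : m → ℝ) : ℝ :=
  Real.sqrt (x ⬝ᵥ K *ᵥ x)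

lemma aux_dot_nonneg {n : ℕ} (v : Fin n → ℝ) : 0 ≤ v ⬝ᵥ v :=
  Finset.sum_nonneg fun _ _ => mul_self_nonneg _

lemma aux_cs {n : ℕ} (u w : Fin n → ℝ) :
    u ⬝ᵥ w ≤ Real.sqrt (u ⬝ᵥ u) * Real.sqrt (w ⬝ᵥ w) := by
  have h := Real.sum_mul_le_sqrt_mul_sqrt Finset.univ u w
  simpa [dotProduct, sq] using h

lemma aux_tri {n : ℕ} (u w : Fin n → ℝ) :
    Real.sqrt ((u + w) ⬝ᵥ (u + w)) ≤ Real.sqrt (u ⬝ᵥ u) + Real.sqrt (w ⬝ᵥ w) := by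
  have hcs := aux_cs u w
  have h1 := Real.sq_sqrt (aux_dot_nonneg u)
  have h2 := Real.sq_sqrt (aux_dot_nonneg w)
  have expand : (u + w) ⬝ᵥ (u + w) = u ⬝ᵥ u + 2 * (u ⬝ᵥ w) + w ⬝ᵥ w := by
    simp [dotProduct_add, add_dotProduct, dotProduct_comm w u]; ring
  rw [expand]
  calc Real.sqrt (u ⬝ᵥ u + 2 * (u ⬝ᵥ w) + w ⬝ᵥ w)
      ≤ Real.sqrt ((Real.sqrt (u ⬝ᵥ u) + Real.sqrt (w ⬝ᵥ w)) ^ 2) :=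
        Real.sqrt_le_sqrt (by nlinarith)
    _ = Real.sqrt (u ⬝ᵥ u) + Real.sqrt (w ⬝ᵥ w) :=
        Real.sqrt_sq (by positivity)

open scoped MatrixOrder in
lemma aux_abs {n : ℕ} {K : Matrix (Fin n) (Fin n) ℝ} (hK : K.PosSemidef) (q z : Fin n → ℝ) :
    |Real.sqrt (q ⬝ᵥ K *ᵥ q) - Real.sqrt (z ⬝ᵥ K *ᵥ z)| ≤
      Real.sqrt ((q - z) ⬝ᵥ K *ᵥ (q - z)) := by
  set S := CFC.sqrt K with hS
  have hsymS : ∀ i j, S i j = S j i := fun i j => by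
    have h := congrFun (congrFun (CFC.sqrt_nonneg K).posSemidef.isHermitian i) j
    simpa [conjTranspose_apply] using h.symm
  have hform : ∀ x : Fin n → ℝ, x ⬝ᵥ K *ᵥ x = (S *ᵥ x) ⬝ᵥ (S *ᵥ x) := by
    intro x
    conv_lhs => rw [← CFC.sqrt_mul_sqrt_self K hK.nonneg]
    rw [← mulVec_mulVec, dotProduct_mulVec]
    congr 1
    ext i
    simp [vecMul, mulVec, dotProduct, mul_comm]
    exact Finset.sum_congr rfl fun j _ => by rw [hsymS i j, mul_comm]
  have hq1 : S *ᵥ q = S *ᵥ z + S *ᵥ (q - z) := by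
    rw [← mulVec_add]; congr 1; ext i; simp
  have hz1 : S *ᵥ z = S *ᵥ q + S *ᵥ (z - q) := by
    rw [← mulVec_add]; congr 1; ext i; simp
  have hneg : (S *ᵥ (z - q)) ⬝ᵥ (S *ᵥ (z - q)) = (S *ᵥ (q - z)) ⬝ᵥ (S *ᵥ (q - z)) := by
    have : z - q = -(q - z) := by abel
    rw [this, mulVec_neg, neg_dotProduct, dotProduct_neg, neg_neg]
  rw [abs_sub_le_iff]
  constructor
  · rw [hform q, hform z, hform (q - z), hq1]
    have := aux_tri (S *ᵥ z) (S *ᵥ (q - z))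
    linarith
  · rw [hform q, hform z, hform (q - z), hz1, ← hneg]
    have := aux_tri (S *ᵥ q) (S *ᵥ (z - q))
    linarith

lemma aux_mono {n : ℕ} {M N : Matrix (Fin n) (Fin n) ℝ} (h : (N - M).PosSemidef)
    (x : Fin n → ℝ) : x ⬝ᵥ M *ᵥ x ≤ x ⬝ᵥ N *ᵥ x := by
  have h2 := h.dotProduct_mulVec_nonneg x
  simp only [star_trivial, sub_mulVec, dotProduct_sub] at h2
  linarith

lemma aux_swap {n : ℕ} (a : Matrix (Fin n) (Fin n) ℝ) (hsym : ∀ i j, a i j = a j i)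
    (x : Fin n → ℝ) :
    ∑ i, ∑ j, a i j * x j ^ 2 = ∑ i, ∑ j, a i j * x i ^ 2 := by
  rw [Finset.sum_comm]
  exact Finset.sum_congr rfl fun j _ => Finset.sum_congr rfl fun i _ => by rw [hsym i j]

lemma aux_lap_psd {n : ℕ} (a : Matrix (Fin n) (Fin n) ℝ) (hsym : ∀ i j, a i j = a j i)
    (hnn : ∀ i j, 0 ≤ a i j) (f : Fin n → ℝ) (hf : ∀ i, f i = ∑ j, a i j) (ε : ℝ)
    (hε : ε = 1 ∨ ε = -1) :
    PosSemidef ((Matrix.diagonal f) + ε • a) := by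
  have haherm : (ε • a).IsHermitian := by
    ext i j; simp [conjTranspose_apply, hsym j i]
  apply PosSemidef.of_dotProduct_mulVec_nonneg
  · exact (isHermitian_diagonal _).add haherm
  · intro x
    simp only [star_trivial]
    have hexp : x ⬝ᵥ ((Matrix.diagonal f) + ε • a) *ᵥ x
        = (∑ i, ∑ j, a i j * x i ^ 2) + ε * ∑ i, ∑ j, a i j * x i * x j := by
      rw [add_mulVec, smul_mulVec, dotProduct_add, dotProduct_smul]
      congr 1
      · simp only [dotProduct, mulVec_diagonal]
        refine Finset.sum_congr rfl fun i _ => ?_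
        rw [hf i, Finset.sum_mul, Finset.mul_sum]
        exact Finset.sum_congr rfl fun j _ => by ring
      · rw [smul_eq_mul]
        congr 1
        simp only [dotProduct, mulVec]
        refine Finset.sum_congr rfl fun i _ => ?_
        rw [Finset.mul_sum]
        exact Finset.sum_congr rfl fun j _ => by ring
    rw [hexp]
    have hterm : ∀ i j, a i j * (x i + ε * x j) ^ 2
        = a i j * x i ^ 2 + a i j * x j ^ 2 + 2 * ε * (a i j * x i * x j) := by
      intro i j; rcases hε with h | h <;> subst h <;> ring
    have hnn2 : (0:ℝ) ≤ ∑ i, ∑ j, a i j * (x i + ε * x j) ^ 2 :=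
      Finset.sum_nonneg fun i _ => Finset.sum_nonneg fun j _ =>
        mul_nonneg (hnn i j) (sq_nonneg _)
    have hsplit : ∑ i, ∑ j, a i j * (x i + ε * x j) ^ 2
        = (∑ i, ∑ j, a i j * x i ^ 2) + (∑ i, ∑ j, a i j * x j ^ 2)
          + 2 * ε * ∑ i, ∑ j, a i j * x i * x j := by
      simp only [hterm, Finset.sum_add_distrib, ← Finset.mul_sum]
    have hsw := aux_swap a hsym x
    nlinarith [hnn2, hsplit, hsw]

lemma aux_max_min (a : ℝ) : max a 0 + min a 0 = a := by
  rcases le_total a 0 with h | h <;>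
    simp [max_eq_right, max_eq_left, min_eq_left, min_eq_right, h]

lemma aux_abs_eq (a : ℝ) : |a| = max a 0 - min a 0 := by
  rcases le_total a 0 with h | h <;>
    simp [abs_of_nonpos, abs_of_nonneg, max_eq_right, max_eq_left, min_eq_left,
      min_eq_right, h]

theorem stmt_16 (n : ℕ) (hn : 1 ≤ n) (A : Matrix (Fin n) (Fin n) ℝ)
    (hAsymm : A.IsSymm) (hAdiag : ∀ i, A i i = 0)
    (hAval : ∀ i j, A i j = -1 ∨ A i j = 0 ∨ A i j = 1)
    (Apos Aneg D Dp Dm L Lp Lm : Matrix (Fin n) (Fin n) ℝ)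
    (hApos : ∀ i j, Apos i j = max (A i j) 0)
    (hAneg : ∀ i j, Aneg i j = min (A i j) 0)
    (hD : D = Matrix.diagonal fun i => ∑ j, |A i j|)
    (hDp : Dp = Matrix.diagonal fun i => ∑ j, Apos i j)
    (hDm : Dm = Matrix.diagonal fun i => ∑ j, |Aneg i j|)
    (hL : L = D - A) (hLp : Lp = Dp - Apos) (hLm : Lm = Dm - Aneg)
    (s : Fin n → ℝ) (hs : ∀ i, s i ∈ Set.Icc (-1 : ℝ) 1)
    (δ : ℝ) (hδ : 0 < δ)
    (z : Fin n → ℝ) (hz : z = (1 + L)⁻¹ *ᵥ s)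
    (q : Fin n → ℝ)
    (hq : matNorm (1 + L) (q - z) ≤ δ * matNorm (1 + L) z) :
    |Real.sqrt (q ⬝ᵥ Lp *ᵥ q) - Real.sqrt (z ⬝ᵥ Lp *ᵥ z)| ≤
      Real.sqrt 2 * δ * n ∧
    |Real.sqrt (q ⬝ᵥ Lm *ᵥ q) - Real.sqrt (z ⬝ᵥ Lm *ᵥ z)| ≤
      Real.sqrt 2 * δ * n := by
  -- basic facts about the pieces
  have hApos_nn : ∀ i j, 0 ≤ Apos i j := fun i j => by rw [hApos]; exact le_max_right _ _
  have hApos_sym : ∀ i j, Apos i j = Apos j i := fun i j => by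
    rw [hApos, hApos, ← hAsymm.apply i j]
  have hAneg_np : ∀ i j, Aneg i j ≤ 0 := fun i j => by rw [hAneg]; exact min_le_right _ _
  have hW_nn : ∀ i j, 0 ≤ (-Aneg) i j := fun i j => by
    simp only [Matrix.neg_apply]; linarith [hAneg_np i j]
  have hW_sym : ∀ i j, (-Aneg) i j = (-Aneg) j i := fun i j => by
    simp only [Matrix.neg_apply, hAneg, ← hAsymm.apply i j]
  -- Lp is PSD
  have hLp' : Lp = Matrix.diagonal (fun i => ∑ j, Apos i j) + (-1 : ℝ) • Apos := by
    rw [hLp, hDp]; ext i j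
    simp [Matrix.sub_apply, Matrix.add_apply, Matrix.smul_apply]
    ring
  have hLpPSD : Lp.PosSemidef := by
    rw [hLp']
    exact aux_lap_psd Apos hApos_sym hApos_nn _ (fun i => rfl) (-1) (Or.inr rfl)
  -- Lm is PSD
  have habsAneg : ∀ i j, |Aneg i j| = (-Aneg) i j := fun i j => by
    simp [abs_of_nonpos (hAneg_np i j)]
  have hLm' : Lm = Matrix.diagonal (fun i => ∑ j, (-Aneg) i j) + (1 : ℝ) • (-Aneg) := by
    rw [hLm, hDm]
    have hfun : (fun i => ∑ j, |Aneg i j|) = fun i => ∑ j, (-Aneg) i j :=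
      funext fun i => Finset.sum_congr rfl fun j _ => habsAneg i j
    rw [hfun]; ext i j
    simp only [Matrix.sub_apply, Matrix.add_apply, Matrix.smul_apply, one_smul, Matrix.neg_apply]
    ring
  have hLmPSD : Lm.PosSemidef := by
    rw [hLm']
    exact aux_lap_psd (-Aneg) hW_sym hW_nn _ (fun i => rfl) 1 (Or.inl rfl)
  -- L = Lp + Lm
  have hval : ∀ i j, A i j = Apos i j + Aneg i j := fun i j => by
    rw [hApos, hAneg, aux_max_min]
  have habs : ∀ i j, |A i j| = Apos i j + |Aneg i j| := fun i j => by
    rw [hApos, hAneg, aux_abs_eq, abs_of_nonpos (min_le_right (A i j) 0)]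
    ring
  have hLsum : L = Lp + Lm := by
    rw [hL, hD, hLp, hDp, hLm, hDm]
    ext i j
    have hsum : ∑ k, |A i k| = (∑ k, Apos i k) + ∑ k, |Aneg i k| := by
      rw [← Finset.sum_add_distrib]
      exact Finset.sum_congr rfl fun k _ => habs i k
    by_cases h : i = j
    · subst h
      simp only [Matrix.sub_apply, Matrix.add_apply, Matrix.diagonal_apply_eq]
      rw [hsum, hval i i]; ring
    · simp only [Matrix.sub_apply, Matrix.add_apply, Matrix.diagonal_apply_ne _ h]
      rw [hval i j]; ring
  have hLPSD : L.PosSemidef := by rw [hLsum]; exact hLpPSD.add hLmPSD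
  have hILPD : (1 + L).PosDef := Matrix.PosDef.add_posSemidef Matrix.PosDef.one hLPSD
  -- (1+L) z = s
  have hILz : (1 + L) *ᵥ z = s := by
    rw [hz, mulVec_mulVec, Matrix.mul_nonsing_inv _ hILPD.det_pos.ne'.isUnit, one_mulVec]
  -- bound on matNorm (1+L) z
  have hT0 : 0 ≤ z ⬝ᵥ (1 + L) *ᵥ z := by
    have := hLPSD.dotProduct_mulVec_nonneg z
    simp only [star_trivial] at this
    rw [add_mulVec, one_mulVec, dotProduct_add]
    have := aux_dot_nonneg z
    linarith [hLPSD.dotProduct_mulVec_nonneg z, aux_dot_nonneg z,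
      (by simpa only [star_trivial] using hLPSD.dotProduct_mulVec_nonneg z : (0:ℝ) ≤ z ⬝ᵥ L *ᵥ z)]
  have hzzT : z ⬝ᵥ z ≤ z ⬝ᵥ (1 + L) *ᵥ z := by
    rw [add_mulVec, one_mulVec, dotProduct_add]
    have : (0:ℝ) ≤ z ⬝ᵥ L *ᵥ z := by simpa only [star_trivial] using hLPSD.dotProduct_mulVec_nonneg z
    linarith
  have hss : s ⬝ᵥ s ≤ (n : ℝ) := by
    have : ∀ i, s i * s i ≤ 1 := by
      intro i
      obtain ⟨h1, h2⟩ := hs i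
      nlinarith
    calc s ⬝ᵥ s = ∑ i, s i * s i := rfl
      _ ≤ ∑ _i : Fin n, (1:ℝ) := Finset.sum_le_sum fun i _ => this i
      _ = n := by simp
  have h1 : z ⬝ᵥ (1 + L) *ᵥ z = z ⬝ᵥ s := by
    calc z ⬝ᵥ (1 + L) *ᵥ z = ((1 + L) *ᵥ z) ⬝ᵥ z := dotProduct_comm _ _
      _ = s ⬝ᵥ z := by rw [hILz]
      _ = z ⬝ᵥ s := dotProduct_comm _ _
  set t := matNorm (1 + L) z with ht
  have ht0 : 0 ≤ t := Real.sqrt_nonneg _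
  have ht2 : t ^ 2 = z ⬝ᵥ (1 + L) *ᵥ z := Real.sq_sqrt hT0
  have hsqn0 : (0:ℝ) ≤ Real.sqrt n := Real.sqrt_nonneg _
  have htn : t ≤ Real.sqrt n := by
    have hTle : z ⬝ᵥ (1 + L) *ᵥ z ≤ t * Real.sqrt n := by
      rw [h1]
      calc z ⬝ᵥ s ≤ Real.sqrt (z ⬝ᵥ z) * Real.sqrt (s ⬝ᵥ s) := aux_cs z s
        _ ≤ t * Real.sqrt n := by
            apply mul_le_mul (Real.sqrt_le_sqrt hzzT) (Real.sqrt_le_sqrt hss)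
              (Real.sqrt_nonneg _) ht0
    nlinarith [ht2, hTle, ht0, hsqn0]
  -- numeric glue
  have hn1 : (1:ℝ) ≤ (n:ℝ) := by exact_mod_cast hn
  have hsn : Real.sqrt n ≤ (n:ℝ) := by
    calc Real.sqrt n ≤ Real.sqrt ((n:ℝ) ^ 2) := Real.sqrt_le_sqrt (by nlinarith)
      _ = (n:ℝ) := Real.sqrt_sq (by positivity)
  have hs2 : (1:ℝ) ≤ Real.sqrt 2 := by
    rw [show (1:ℝ) = Real.sqrt 1 from (Real.sqrt_one).symm]
    exact Real.sqrt_le_sqrt one_le_two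
  have hq' : matNorm (1 + L) (q - z) ≤ Real.sqrt 2 * δ * n := by
    calc matNorm (1 + L) (q - z) ≤ δ * t := hq
      _ ≤ δ * Real.sqrt n := by nlinarith
      _ ≤ Real.sqrt 2 * δ * n := by
          nlinarith [mul_le_mul_of_nonneg_left hsn hδ.le,
            mul_nonneg (sub_nonneg.2 hs2) (mul_nonneg hδ.le (le_trans zero_le_one hn1))]
  -- the two conclusions
  have main : ∀ K : Matrix (Fin n) (Fin n) ℝ, K.PosSemidef → ((1 + L) - K).PosSemidef →
      |Real.sqrt (q ⬝ᵥ K *ᵥ q) - Real.sqrt (z ⬝ᵥ K *ᵥ z)| ≤ Real.sqrt 2 * δ * n := by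
    intro K hK hdiff
    calc |Real.sqrt (q ⬝ᵥ K *ᵥ q) - Real.sqrt (z ⬝ᵥ K *ᵥ z)|
        ≤ Real.sqrt ((q - z) ⬝ᵥ K *ᵥ (q - z)) := aux_abs hK q z
      _ ≤ Real.sqrt ((q - z) ⬝ᵥ (1 + L) *ᵥ (q - z)) :=
          Real.sqrt_le_sqrt (aux_mono hdiff (q - z))
      _ = matNorm (1 + L) (q - z) := rfl
      _ ≤ Real.sqrt 2 * δ * n := hq'
  have hdp : ((1 + L) - Lp).PosSemidef := by
    have heq : (1 + L) - Lp = 1 + Lm := by rw [hLsum]; abel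
    rw [heq]; exact Matrix.PosSemidef.one.add hLmPSD
  have hdm : ((1 + L) - Lm).PosSemidef := by
    have heq : (1 + L) - Lm = 1 + Lp := by rw [hLsum]; abel
    rw [heq]; exact Matrix.PosSemidef.one.add hLpPSD
  exact ⟨main Lp hLpPSD hdp, main Lm hLmPSD hdm⟩
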